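/- Let μ be a positive measure on ℂ carried by the disc D = {ξ ∈ ℂ : |ξ|² < R} satisfying the moment conditions ∫_D ξ^n conj(ξ)^m e_q(|ξ|²)^{-1} dμ(ξ) = π [n]_q! if n = m and = 0 if n ≠ m, for all n, m ∈ ℕ. Let b : ℕ → ℂ satisfy Σ_n |b(n)| < ∞, and define f : D → ℂ by f(ξ) = Σ_{n=0}^∞ b(n) ξ^n/√([n]_q!) (this series converges absolutely on D). Then for every z with |z|² < R, the function ξ ↦ K(z, ξ) f(ξ) is μ-integrable and the self-reproducing property holds: ∫_D K(z, ξ) f(ξ) dμ(ξ) = f(z), where K(z, ξ) = (1/π) e_q(|ξ|²)^{-1} e_q(conj(ξ) z). -/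

import Mathlib

open scoped BigOperators

/-- The q-number `[n]_q = (1 - q^n)/(1 - q)`. -/
noncomputable def qnum (q : ℝ) (n : ℕ) : ℝ := (1 - q ^ n) / (1 - q)

/-- The q-factorial `[n]_q! = [1]_q [2]_q ⋯ [n]_q`, with `[0]_q! = 1`. -/
noncomputable def qfact (q : ℝ) : ℕ → ℝ
  | 0 => 1
  | n + 1 => qfact q n * qnum q (n + 1)

/-- The complex q-exponential `e_q(w) = ∑ w^n/[n]_q!`. -/
noncomputable def qexC (q : ℝ) (w : ℂ) : ℂ := ∑' n : ℕ, w ^ n / (qfact q n : ℂ)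

/-- The real q-exponential `e_q(x) = ∑ x^n/[n]_q!`. -/
noncomputable def qexR (q : ℝ) (x : ℝ) : ℝ := ∑' n : ℕ, x ^ n / qfact q n

open MeasureTheory

/-- The self-reproducing kernel `K(u,v) = (1/π) e_q(|v|²)^{-1} e_q(conj(v) u)`. -/
noncomputable def Kker (q : ℝ) (u v : ℂ) : ℂ :=
  ((Real.pi : ℝ) : ℂ)⁻¹ * (((qexR q (‖v‖ ^ 2))⁻¹ : ℝ) : ℂ) * qexC q ((starRingEnd ℂ) v * u)

open scoped ENNReal NNReal
set_option maxHeartbeats 1000000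

set_option linter.unusedSectionVars false
section helpers
variable {q : ℝ} (hq0 : 0 < q) (hq1 : q < 1)
include hq0 hq1

lemma one_le_qnum (n : ℕ) : 1 ≤ qnum q (n + 1) := by
  have h1q : (0:ℝ) < 1 - q := by linarith
  have : q ^ (n+1) ≤ q ^ 1 := pow_le_pow_of_le_one hq0.le hq1.le (by omega)
  rw [qnum, le_div_iff₀ h1q]
  simpa using by linarith [this]

lemma qnum_mono {N n : ℕ} (h : N ≤ n) : qnum q N ≤ qnum q n := by
  have h1q : (0:ℝ) < 1 - q := by linarith
  have : q ^ n ≤ q ^ N := pow_le_pow_of_le_one hq0.le hq1.le h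
  exact (div_le_div_iff_of_pos_right h1q).mpr (by linarith)

lemma qfact_one_le (n : ℕ) : 1 ≤ qfact q n := by
  induction n with
  | zero => simp [qfact]
  | succ k ih =>
    have := one_le_qnum hq0 hq1 k
    calc (1:ℝ) ≤ qfact q k := ih
    _ ≤ qfact q k * qnum q (k+1) := le_mul_of_one_le_right (by linarith) this
    _ = qfact q (k+1) := rfl

lemma qfact_pos (n : ℕ) : 0 < qfact q n := lt_of_lt_of_le one_pos (qfact_one_le hq0 hq1 n)

lemma exists_qnum_gt {x : ℝ} (hx : x < 1 / (1 - q)) : ∃ N, x < qnum q N := by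
  have h1q : (0:ℝ) < 1 - q := by linarith
  have hx1 : x * (1 - q) < 1 := (lt_div_iff₀ h1q).mp hx
  obtain ⟨N, hN⟩ := exists_pow_lt_of_lt_one (show (0:ℝ) < 1 - x * (1-q) by linarith) hq1
  exact ⟨N, by rw [qnum, lt_div_iff₀ h1q]; linarith⟩

lemma summable_pow_div_qfact {x : ℝ} (hx0 : 0 ≤ x) (hx : x < 1 / (1 - q)) :
    Summable fun n : ℕ => x ^ n / qfact q n := by
  rcases hx0.eq_or_lt with h0 | hx0'
  · apply summable_of_ne_finset_zero (s := {0})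
    intro n hn
    simp at hn
    simp [← h0, zero_pow hn]
  · obtain ⟨N, hN⟩ := exists_qnum_gt hq0 hq1 hx
    have hqN : 0 < qnum q N := lt_trans hx0' hN
    apply summable_of_ratio_norm_eventually_le (r := x / qnum q N) ((div_lt_one hqN).mpr hN)
    filter_upwards [Filter.eventually_ge_atTop N] with n hn
    have h1 : qnum q N ≤ qnum q (n+1) := qnum_mono hq0 hq1 (hn.trans n.le_succ)
    have hfp := qfact_pos hq0 hq1 n
    have hqn1 : 0 < qnum q (n+1) := lt_of_lt_of_le hqN h1
    have key : x ^ (n+1) / qfact q (n+1) = (x ^ n / qfact q n) * (x / qnum q (n+1)) := by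
      rw [div_mul_div_comm, ← pow_succ]
      rfl
    have hfp1 := qfact_pos hq0 hq1 (n+1)
    have hnn : 0 ≤ x ^ n / qfact q n := by positivity
    rw [Real.norm_eq_abs, Real.norm_eq_abs, abs_of_nonneg (by positivity),
      abs_of_nonneg hnn, key, mul_comm (x / qnum q N)]
    gcongr

lemma summable_pow_div_sqrt_qfact {x : ℝ} (hx0 : 0 ≤ x) (hx : x ^ 2 < 1 / (1 - q)) :
    Summable fun n : ℕ => x ^ n / Real.sqrt (qfact q n) := by
  rcases hx0.eq_or_lt with h0 | hx0'
  · apply summable_of_ne_finset_zero (s := {0})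
    intro n hn
    simp at hn
    simp [← h0, zero_pow hn]
  · obtain ⟨N, hN⟩ := exists_qnum_gt hq0 hq1 hx
    have hqN : 0 < qnum q N := lt_of_lt_of_le (by positivity) hN.le
    have hsN : x < Real.sqrt (qnum q N) := (Real.lt_sqrt hx0).mpr hN
    have hsNpos : 0 < Real.sqrt (qnum q N) := lt_trans hx0' hsN
    apply summable_of_ratio_norm_eventually_le (r := x / Real.sqrt (qnum q N))
      ((div_lt_one hsNpos).mpr hsN)
    filter_upwards [Filter.eventually_ge_atTop N] with n hn
    have h1 : qnum q N ≤ qnum q (n+1) := qnum_mono hq0 hq1 (hn.trans n.le_succ)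
    have hfp := qfact_pos hq0 hq1 n
    have hqn1 : 0 < qnum q (n+1) := lt_of_lt_of_le hqN h1
    have hs1 : Real.sqrt (qnum q N) ≤ Real.sqrt (qnum q (n+1)) := Real.sqrt_le_sqrt h1
    have key : x ^ (n+1) / Real.sqrt (qfact q (n+1))
        = (x ^ n / Real.sqrt (qfact q n)) * (x / Real.sqrt (qnum q (n+1))) := by
      rw [div_mul_div_comm, ← pow_succ]
      congr 1
      rw [show qfact q (n+1) = qfact q n * qnum q (n+1) from rfl, Real.sqrt_mul hfp.le]
    have hfp1 := qfact_pos hq0 hq1 (n+1)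
    have hnn : 0 ≤ x ^ n / Real.sqrt (qfact q n) := by positivity
    rw [Real.norm_eq_abs, Real.norm_eq_abs, abs_of_nonneg (by positivity),
      abs_of_nonneg hnn, key, mul_comm (x / Real.sqrt (qnum q N))]
    gcongr

end helpers

lemma amgm_aux (a b e s : ℝ) (hs : 0 < s) (he : 0 ≤ e) :
    a * b * e ≤ (a^2*e/s + s*(b^2*e))/2 := by
  rw [div_add' _ _ _ hs.ne', div_div, le_div_iff₀ (by positivity)]
  nlinarith [mul_nonneg he (sq_nonneg (a - s*b))]

/-- if a positive measure `μ` carried by the disc `D = {ξ : |ξ|² < R}`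
satisfies the moment conditions `∫_D ξ^n conj(ξ)^m e_q(|ξ|²)^{-1} dμ = π [n]_q! δ_{nm}`,
and `f(ξ) = ∑ b(n) ξ^n/√([n]_q!)` with `∑ |b(n)| < ∞` (the series converging absolutely
on `D`), then for every `z` with `|z|² < R` the function `ξ ↦ K(z,ξ) f(ξ)` is
`μ`-integrable on `D` and `∫_D K(z,ξ) f(ξ) dμ(ξ) = f(z)`. -/
theorem kernel_self_reproducing_property (q : ℝ) (hq0 : 0 < q) (hq1 : q < 1)
    (μ : Measure ℂ)
    (hcar : μ {ξ : ℂ | ¬ ‖ξ‖ ^ 2 < 1 / (1 - q)} = 0)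
    (hmomInt : ∀ n m : ℕ, IntegrableOn
      (fun ξ : ℂ => ξ ^ n * ((starRingEnd ℂ) ξ) ^ m * (((qexR q (‖ξ‖ ^ 2))⁻¹ : ℝ) : ℂ))
      {ξ : ℂ | ‖ξ‖ ^ 2 < 1 / (1 - q)} μ)
    (hmom : ∀ n m : ℕ,
      ∫ ξ in {ξ : ℂ | ‖ξ‖ ^ 2 < 1 / (1 - q)},
          ξ ^ n * ((starRingEnd ℂ) ξ) ^ m * (((qexR q (‖ξ‖ ^ 2))⁻¹ : ℝ) : ℂ) ∂μ =
        if n = m then ((Real.pi : ℝ) : ℂ) * (qfact q n : ℂ) else 0)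
    (b : ℕ → ℂ) (hb : Summable (fun n : ℕ => ‖b n‖))
    (f : ℂ → ℂ)
    (hf : ∀ ξ : ℂ, ‖ξ‖ ^ 2 < 1 / (1 - q) →
      f ξ = ∑' n : ℕ, b n * ξ ^ n / ((Real.sqrt (qfact q n) : ℝ) : ℂ))
    (z : ℂ) (hz : ‖z‖ ^ 2 < 1 / (1 - q)) :
    (∀ ξ : ℂ, ‖ξ‖ ^ 2 < 1 / (1 - q) →
      Summable (fun n : ℕ => ‖b n * ξ ^ n / ((Real.sqrt (qfact q n) : ℝ) : ℂ)‖)) ∧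
    IntegrableOn (fun ξ : ℂ => Kker q z ξ * f ξ) {ξ : ℂ | ‖ξ‖ ^ 2 < 1 / (1 - q)} μ ∧
    ∫ ξ in {ξ : ℂ | ‖ξ‖ ^ 2 < 1 / (1 - q)}, Kker q z ξ * f ξ ∂μ = f z := by
  have h1q : (0:ℝ) < 1 - q := by linarith
  have hfpos : ∀ n, 0 < qfact q n := qfact_pos hq0 hq1
  have hsq : ∀ n, 0 < Real.sqrt (qfact q n) := fun n => Real.sqrt_pos.mpr (hfpos n)
  have hqe : ∀ ξ : ℂ, 0 ≤ (qexR q (‖ξ‖^2))⁻¹ := fun ξ =>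
    inv_nonneg.mpr (tsum_nonneg fun n => div_nonneg (by positivity) (hfpos n).le)
  -- Part 1 : summability of the series defining f on D
  have part1 : ∀ ξ : ℂ, ‖ξ‖^2 < 1/(1-q) →
      Summable (fun n => ‖b n * ξ^n / ((Real.sqrt (qfact q n) : ℝ):ℂ)‖) := by
    intro ξ hξ
    have hT : Summable (fun n => ‖ξ‖^n / Real.sqrt (qfact q n)) :=
      summable_pow_div_sqrt_qfact hq0 hq1 (norm_nonneg ξ) hξ
    have hnorm : ∀ n : ℕ, ‖b n * ξ^n / ((Real.sqrt (qfact q n):ℝ):ℂ)‖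
        = ‖b n‖ * (‖ξ‖^n / Real.sqrt (qfact q n)) := by
      intro n
      rw [norm_div, norm_mul, norm_pow, Complex.norm_real, Real.norm_eq_abs,
        abs_of_nonneg (Real.sqrt_nonneg _), mul_div_assoc]
    have hC : ∀ n, ‖ξ‖^n / Real.sqrt (qfact q n)
        ≤ ∑' k, ‖ξ‖^k / Real.sqrt (qfact q k) :=
      fun n => Summable.le_tsum hT n (fun k _ => by positivity)
    refine Summable.of_nonneg_of_le (fun n => norm_nonneg _) (fun n => ?_)
      (hb.mul_right (∑' k, ‖ξ‖^k / Real.sqrt (qfact q k)))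
    rw [hnorm n]
    exact mul_le_mul_of_nonneg_left (hC n) (norm_nonneg _)
  refine ⟨part1, ?_⟩
  set D : Set ℂ := {ξ : ℂ | ‖ξ‖ ^ 2 < 1 / (1 - q)} with hDdef
  set ν : Measure ℂ := μ.restrict D with hν
  have hπ : (0:ℝ) < Real.pi := Real.pi_pos
  set c : ℕ → ℕ → ℂ := fun n m =>
    ((Real.pi : ℝ) : ℂ)⁻¹ * b n * z ^ m /
      ((qfact q m : ℂ) * ((Real.sqrt (qfact q n) : ℝ) : ℂ)) with hc
  set G : ℕ → ℕ → ℂ → ℂ := fun n m ξ =>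
    ξ ^ n * ((starRingEnd ℂ) ξ) ^ m * (((qexR q (‖ξ‖ ^ 2))⁻¹ : ℝ) : ℂ) with hG
  set F : ℕ × ℕ → ℂ → ℂ := fun p ξ => c p.1 p.2 * G p.1 p.2 ξ with hF
  have hGint : ∀ n m, Integrable (G n m) ν := fun n m => hmomInt n m
  have hFint : ∀ p, Integrable (F p) ν := fun p => (hGint p.1 p.2).const_mul _
  have hGnorm : ∀ n m (ξ : ℂ), ‖G n m ξ‖ = ‖ξ‖^n * ‖ξ‖^m * (qexR q (‖ξ‖^2))⁻¹ := by
    intro n m ξ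
    rw [hG]
    simp only [norm_mul, norm_pow, Complex.norm_real, RingHomIsometric.norm_map,
      Real.norm_eq_abs, abs_of_nonneg (hqe ξ)]
  -- diagonal values
  have hdiag : ∀ n, ∫ ξ, ‖G n n ξ‖ ∂ν = Real.pi * qfact q n := by
    intro n
    have hptw : ∀ ξ : ℂ, G n n ξ =
        ((((‖ξ‖^2)^n * (qexR q (‖ξ‖^2))⁻¹ : ℝ)) : ℂ) := by
      intro ξ
      rw [hG]
      push_cast
      rw [← mul_pow, Complex.mul_conj, Complex.normSq_eq_norm_sq]
      norm_cast
    have h1 : ∫ ξ, G n n ξ ∂ν =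
        ((∫ ξ, (‖ξ‖^2)^n * (qexR q (‖ξ‖^2))⁻¹ ∂ν : ℝ) : ℂ) := by
      rw [show (fun ξ => G n n ξ) = fun ξ =>
        ((((‖ξ‖^2)^n * (qexR q (‖ξ‖^2))⁻¹ : ℝ)) : ℂ) from funext hptw]
      exact integral_ofReal
    have h2 := hmom n n
    rw [if_pos rfl] at h2
    have h3 : (∫ ξ, (‖ξ‖^2)^n * (qexR q (‖ξ‖^2))⁻¹ ∂ν) = Real.pi * qfact q n := by
      have := h1.symm.trans h2
      exact_mod_cast this
    rw [← h3]
    congr 1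
    funext ξ
    rw [hGnorm, ← pow_mul, pow_mul']
    ring
  -- off-diagonal bound via AM-GM
  have hoff : ∀ n m, ∫ ξ, ‖G n m ξ‖ ∂ν ≤
      Real.pi * (Real.sqrt (qfact q n) * Real.sqrt (qfact q m)) := by
    intro n m
    set s : ℝ := Real.sqrt (qfact q n) / Real.sqrt (qfact q m) with hs
    have hspos : 0 < s := div_pos (hsq n) (hsq m)
    have hmono : ∫ ξ, ‖G n m ξ‖ ∂ν ≤
        ∫ ξ, (‖G n n ξ‖/s + s * ‖G m m ξ‖)/2 ∂ν := by
      apply integral_mono (hGint n m).norm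
      · exact (((hGint n n).norm.div_const s).add ((hGint m m).norm.const_mul s)).div_const 2
      intro ξ
      show ‖G n m ξ‖ ≤ (‖G n n ξ‖/s + s * ‖G m m ξ‖)/2
      rw [hGnorm n m ξ, hGnorm n n ξ, hGnorm m m ξ]
      have := amgm_aux (‖ξ‖^n) (‖ξ‖^m) ((qexR q (‖ξ‖^2))⁻¹) s hspos (hqe ξ)
      calc ‖ξ‖^n * ‖ξ‖^m * (qexR q (‖ξ‖^2))⁻¹
          ≤ ((‖ξ‖^n)^2*(qexR q (‖ξ‖^2))⁻¹/s + s*((‖ξ‖^m)^2*(qexR q (‖ξ‖^2))⁻¹))/2 := this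
        _ = (‖ξ‖^n * ‖ξ‖^n * (qexR q (‖ξ‖^2))⁻¹/s
              + s * (‖ξ‖^m * ‖ξ‖^m * (qexR q (‖ξ‖^2))⁻¹))/2 := by ring
    have hval : ∫ ξ, (‖G n n ξ‖/s + s * ‖G m m ξ‖)/2 ∂ν
        = ((Real.pi * qfact q n)/s + s * (Real.pi * qfact q m))/2 := by
      rw [integral_div, integral_add ((hGint n n).norm.div_const s)
        ((hGint m m).norm.const_mul s), integral_div, integral_const_mul,
        hdiag n, hdiag m]
    rw [hval] at hmono
    refine hmono.trans_eq ?_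
    have h1 : qfact q n = Real.sqrt (qfact q n) * Real.sqrt (qfact q n) :=
      (Real.mul_self_sqrt (hfpos n).le).symm
    have h2 : qfact q m = Real.sqrt (qfact q m) * Real.sqrt (qfact q m) :=
      (Real.mul_self_sqrt (hfpos m).le).symm
    have hu := (hsq n).ne'
    have hv := (hsq m).ne'
    rw [hs, h1, h2]
    field_simp
    rw [Real.sqrt_sq (hsq m).le, Real.sqrt_sq (hsq n).le]
    ring
  -- norm of the constants and the summable bound
  set B : ℕ × ℕ → ℝ := fun p => ‖b p.1‖ * (‖z‖^p.2 / Real.sqrt (qfact q p.2)) with hB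
  have hcnorm : ∀ n m, ‖c n m‖ =
      Real.pi⁻¹ * ‖b n‖ * ‖z‖^m / (qfact q m * Real.sqrt (qfact q n)) := by
    intro n m
    rw [hc]
    simp only [norm_div, norm_mul, norm_pow, norm_inv, Complex.norm_real,
      Real.norm_eq_abs, abs_of_nonneg hπ.le, abs_of_nonneg (hfpos m).le,
      abs_of_nonneg (Real.sqrt_nonneg _)]
  have hFbound : ∀ p, ∫ ξ, ‖F p ξ‖ ∂ν ≤ B p := by
    intro p
    have h1 : ∫ ξ, ‖F p ξ‖ ∂ν = ‖c p.1 p.2‖ * ∫ ξ, ‖G p.1 p.2 ξ‖ ∂ν := by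
      rw [← integral_const_mul]
      congr 1
      funext ξ
      rw [hF, norm_mul]
    rw [h1]
    calc ‖c p.1 p.2‖ * ∫ ξ, ‖G p.1 p.2 ξ‖ ∂ν
        ≤ ‖c p.1 p.2‖ * (Real.pi * (Real.sqrt (qfact q p.1) * Real.sqrt (qfact q p.2))) :=
          mul_le_mul_of_nonneg_left (hoff p.1 p.2) (norm_nonneg _)
      _ = B p := by
          rw [hcnorm, hB]
          have h1 : qfact q p.2 = Real.sqrt (qfact q p.2) * Real.sqrt (qfact q p.2) :=
            (Real.mul_self_sqrt (hfpos p.2).le).symm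
          have hu := (hsq p.1).ne'
          have hv := (hsq p.2).ne'
          rw [h1]
          field_simp
          rw [Real.sqrt_sq (hsq p.2).le]
  have hBsum : Summable B :=
    Summable.mul_of_nonneg hb (summable_pow_div_sqrt_qfact hq0 hq1 (norm_nonneg z) hz)
      (fun n => norm_nonneg _) (fun m => by positivity)
  have hBnonneg : ∀ p, 0 ≤ B p := fun p => by
    rw [hB]; positivity
  -- lintegral bound
  have hlin : ∑' p, ∫⁻ ξ, ‖F p ξ‖₊ ∂ν ≠ ⊤ := by
    have h1 : ∀ p : ℕ × ℕ, ∫⁻ ξ, ‖F p ξ‖₊ ∂ν ≤ ENNReal.ofReal (B p) := by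
      intro p
      change ∫⁻ ξ, ‖F p ξ‖ₑ ∂ν ≤ _
      rw [← ofReal_integral_norm_eq_lintegral_enorm (hFint p)]
      exact ENNReal.ofReal_le_ofReal (hFbound p)
    have h2 : ∑' p, ∫⁻ ξ, ‖F p ξ‖₊ ∂ν ≤ ∑' p, ENNReal.ofReal (B p) :=
      ENNReal.tsum_le_tsum h1
    rw [← ENNReal.ofReal_tsum_of_nonneg hBnonneg hBsum] at h2
    exact (h2.trans_lt ENNReal.ofReal_lt_top).ne
  -- pointwise identity on D
  have hDmeas : MeasurableSet D := by
    apply measurableSet_lt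
    · exact (continuous_norm.pow 2).measurable
    · exact measurable_const
  have hpt : ∀ ξ : ℂ, ξ ∈ D →
      Summable (fun p : ℕ × ℕ => ‖F p ξ‖) ∧ Kker q z ξ * f ξ = ∑' p, F p ξ := by
    intro ξ hξ
    have hξ' : ‖ξ‖ ^ 2 < 1 / (1 - q) := hξ
    set u : ℕ → ℂ := fun n => b n * ξ ^ n / ((Real.sqrt (qfact q n) : ℝ) : ℂ) with hudef
    set v : ℕ → ℂ := fun m => ((starRingEnd ℂ) ξ * z) ^ m / ((qfact q m : ℝ) : ℂ) with hvdef
    have hu : Summable fun n => ‖u n‖ := part1 ξ hξ'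
    have hw : ‖(starRingEnd ℂ) ξ * z‖ < 1 / (1 - q) := by
      rw [norm_mul, RCLike.norm_conj]
      nlinarith [sq_nonneg (‖ξ‖ - ‖z‖), norm_nonneg ξ, norm_nonneg z]
    have hv : Summable fun m => ‖v m‖ := by
      have h2 : Summable fun m => ‖(starRingEnd ℂ) ξ * z‖ ^ m / qfact q m :=
        summable_pow_div_qfact hq0 hq1 (norm_nonneg _) hw
      refine h2.congr fun m => ?_
      rw [hvdef]
      rw [norm_div, norm_pow, Complex.norm_real, Real.norm_eq_abs,
        abs_of_nonneg (hfpos m).le]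
    set e0 : ℂ := ((Real.pi : ℝ) : ℂ)⁻¹ * (((qexR q (‖ξ‖ ^ 2))⁻¹ : ℝ) : ℂ) with he0
    have hFeq : ∀ p : ℕ × ℕ, F p ξ = e0 * (v p.2 * u p.1) := by
      intro p
      simp only [hF, hc, hG, hudef, hvdef, he0]
      rw [mul_pow]
      ring
    have hprod : Summable fun p : ℕ × ℕ => ‖v p.1 * u p.2‖ := hv.mul_norm hu
    have hprod2 : Summable fun p : ℕ × ℕ => ‖v p.2 * u p.1‖ :=
      (Equiv.prodComm ℕ ℕ).summable_iff.mpr hprod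
    have hFsummable : Summable fun p : ℕ × ℕ => ‖F p ξ‖ := by
      have h3 : Summable fun p : ℕ × ℕ => ‖e0‖ * ‖v p.2 * u p.1‖ := hprod2.mul_left _
      refine h3.congr fun p => ?_
      simp [hFeq p, he0, norm_mul, mul_assoc]
    refine ⟨hFsummable, ?_⟩
    have h1 : Kker q z ξ * f ξ = e0 * (qexC q ((starRingEnd ℂ) ξ * z) * f ξ) := by
      rw [Kker, he0]
      ring
    have h2 : qexC q ((starRingEnd ℂ) ξ * z) * f ξ = ∑' p : ℕ × ℕ, v p.1 * u p.2 := by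
      rw [hf ξ hξ']
      exact tsum_mul_tsum_of_summable_norm hv hu
    have h4 : ∑' p : ℕ × ℕ, e0 * (v p.1 * u p.2) = ∑' p, F p ξ := by
      have h5 : ∀ p : ℕ × ℕ, e0 * (v p.1 * u p.2)
          = (fun p => F p ξ) ((Equiv.prodComm ℕ ℕ) p) := by
        intro p
        simp only [Equiv.prodComm_apply, Prod.swap]
        rw [hFeq (p.2, p.1)]
      rw [tsum_congr h5, (Equiv.prodComm ℕ ℕ).tsum_eq (fun p => F p ξ)]
    rw [h1, h2, ← h4, tsum_mul_left]
  -- integrability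
  set S : ℂ → ℂ := fun ξ => ∑' p, F p ξ with hSdef
  have haesm : AEStronglyMeasurable S ν := by
    set e : ℕ ≃ ℕ × ℕ := (Denumerable.eqv (ℕ × ℕ)).symm with he
    apply aestronglyMeasurable_of_tendsto_ae (u := Filter.atTop)
      (f := fun (k : ℕ) ξ => ∑ i ∈ Finset.range k, F (e i) ξ)
    · intro k
      exact Finset.aestronglyMeasurable_fun_sum _ fun i _ => (hFint (e i)).aestronglyMeasurable
    · filter_upwards [ae_restrict_mem hDmeas] with ξ hξ
      have hsum : Summable fun p => F p ξ := Summable.of_norm (hpt ξ hξ).1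
      exact (e.hasSum_iff.mpr hsum.hasSum).tendsto_sum_nat
  have haee : S =ᵐ[ν] fun ξ => Kker q z ξ * f ξ := by
    have hD : MeasurableSet D := by
      apply measurableSet_lt
      · exact (continuous_norm.pow 2).measurable
      · exact measurable_const
    filter_upwards [ae_restrict_mem hD] with ξ hξ
    exact ((hpt ξ hξ).2).symm
  have hKfint : Integrable (fun ξ => Kker q z ξ * f ξ) ν := by
    refine Integrable.congr ⟨haesm, ?_⟩ haee
    show (∫⁻ ξ, (‖S ξ‖₊ : ℝ≥0∞) ∂ν) < ⊤
    calc ∫⁻ ξ, (‖S ξ‖₊ : ℝ≥0∞) ∂ν ≤ ∫⁻ ξ, ∑' p, (‖F p ξ‖₊ : ℝ≥0∞) ∂ν := by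
          apply lintegral_mono_ae
          filter_upwards [ae_restrict_mem hDmeas] with ξ hξ
          have h1 : ‖S ξ‖ ≤ ∑' p, ‖F p ξ‖ := norm_tsum_le_tsum_norm (hpt ξ hξ).1
          calc (‖S ξ‖₊ : ℝ≥0∞) = ENNReal.ofReal ‖S ξ‖ :=
                (ofReal_norm_eq_enorm _).symm
            _ ≤ ENNReal.ofReal (∑' p, ‖F p ξ‖) := ENNReal.ofReal_le_ofReal h1
            _ = ∑' p, ENNReal.ofReal ‖F p ξ‖ :=
                ENNReal.ofReal_tsum_of_nonneg (fun p => norm_nonneg _) (hpt ξ hξ).1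
            _ = ∑' p, (‖F p ξ‖₊ : ℝ≥0∞) := by
                exact tsum_congr fun p => ofReal_norm_eq_enorm _
      _ = ∑' p, ∫⁻ ξ, ‖F p ξ‖₊ ∂ν :=
          lintegral_tsum fun p => (hFint p).aestronglyMeasurable.enorm
      _ < ⊤ := hlin.lt_top
  refine ⟨hKfint, ?_⟩
  -- value of the integral
  have hswap : ∫ ξ, S ξ ∂ν = ∑' p, ∫ ξ, F p ξ ∂ν :=
    integral_tsum (fun p => (hFint p).aestronglyMeasurable) hlin
  have hIval : ∀ p : ℕ × ℕ, ∫ ξ, F p ξ ∂ν =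
      c p.1 p.2 * (if p.1 = p.2 then ((Real.pi : ℝ) : ℂ) * (qfact q p.1 : ℂ) else 0) := by
    intro p
    rw [hF]
    rw [integral_const_mul]
    congr 1
    exact hmom p.1 p.2
  calc ∫ ξ, Kker q z ξ * f ξ ∂ν = ∫ ξ, S ξ ∂ν := (integral_congr_ae haee).symm
    _ = ∑' p, ∫ ξ, F p ξ ∂ν := hswap
    _ = f z := by
      rw [hf z hz]
      have hsumI : Summable fun p : ℕ × ℕ => ∫ ξ, F p ξ ∂ν :=
        Summable.of_norm_bounded hBsum fun p =>
          (norm_integral_le_integral_norm _).trans (hFbound p)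
      have hinner : ∀ n, Summable fun m => ∫ ξ, F (n, m) ξ ∂ν := by
        intro n
        apply summable_of_ne_finset_zero (s := {n})
        intro m hm
        simp only [Finset.mem_singleton] at hm
        rw [hIval (n, m)]
        simp [if_neg (Ne.symm hm)]
      rw [Summable.tsum_prod' hsumI hinner]
      refine tsum_congr fun n => ?_
      rw [tsum_eq_single n (fun m hm => by
        rw [hIval (n, m)]; simp [if_neg (Ne.symm hm)])]
      rw [hIval (n, n)]
      simp only [if_pos rfl, ↓reduceIte]
      rw [hc]
      have hfne : (qfact q n : ℂ) ≠ 0 := by exact_mod_cast (hfpos n).ne'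
      have hsne : ((Real.sqrt (qfact q n) : ℝ) : ℂ) ≠ 0 := by exact_mod_cast (hsq n).ne'
      have hπne : ((Real.pi : ℝ) : ℂ) ≠ 0 := by exact_mod_cast hπ.ne'
      field_simp
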